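/- Let σ > 0 and γ ∈ (0,1]. The Laplace confidence bound β(n) = σ·√( (2/n)·(1 + 1/n)·ln(√(n+1)/γ) ) is antitone in n on the positive integers: for all integers n ≥ 1, β(n+1) ≤ β(n). -/

import Mathlib

open Real

lemma laplace_key (x c : ℝ) (hx : 1 ≤ x) (hc : 0 ≤ c) :
    2 / (x+1) * (1 + 1/(x+1)) * (Real.log (x+2) / 2 + c) ≤
    2 / x * (1 + 1/x) * (Real.log (x+1) / 2 + c) := by
  have hx0 : 0 < x := by linarith
  have hx1 : 0 < x + 1 := by linarith
  have hx2 : 0 < x + 2 := by linarith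
  set L := Real.log (x+1) with hLdef
  set M := Real.log (x+2) with hMdef
  have hD0 : L ≤ M := Real.log_le_log (by linarith) (by linarith)
  have h1 : (M - L) * (x+1) ≤ 1 := by
    have h := Real.log_le_sub_one_of_pos (show 0 < (x+2)/(x+1) by positivity)
    rw [Real.log_div (by linarith) (by linarith)] at h
    have h' : (x+2)/(x+1) - 1 = 1/(x+1) := by field_simp; ring_nf
    rw [h'] at h
    calc (M - L) * (x+1) ≤ 1/(x+1) * (x+1) := by
            exact mul_le_mul_of_nonneg_right h hx1.le
      _ = 1 := by field_simp
  have h2 : x ≤ L * (x+1) := by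
    have h := Real.log_le_sub_one_of_pos (show 0 < (x+1)⁻¹ by positivity)
    rw [Real.log_inv] at h
    have h' : x/(x+1) ≤ L := by
      have hxx : (x+1)⁻¹ - 1 = -(x/(x+1)) := by field_simp; ring
      rw [hxx] at h
      linarith
    rw [div_le_iff₀ hx1] at h'
    exact h'
  have hL0 : 0 ≤ L := Real.log_nonneg (by linarith)
  rw [show 2/(x+1)*(1+1/(x+1))*(M/2+c) = (x+2)*(M+2*c)/(x+1)^2 by
        field_simp; ring,
      show 2/x*(1+1/x)*(L/2+c) = (x+1)*(L+2*c)/x^2 by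
        field_simp,
      div_le_div_iff₀ (by positivity) (by positivity)]
  nlinarith [mul_le_mul_of_nonneg_left h1 (show (0:ℝ) ≤ x^2*(x+2) by positivity),
    mul_le_mul_of_nonneg_left h2 (show (0:ℝ) ≤ x^2+3*x+1 by nlinarith),
    mul_nonneg hc (show (0:ℝ) ≤ x^2+3*x+1 by nlinarith),
    mul_nonneg (mul_nonneg hc hx1.le) (show (0:ℝ) ≤ x^2+3*x+1 by nlinarith),
    hx1, hL0, hx0]

/-- **The Laplace confidence bound is antitone.**
For `σ > 0` and `γ ∈ (0,1]`, the bound `β(n) = σ·√((2/n)·(1+1/n)·ln(√(n+1)/γ))`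
satisfies `β(n+1) ≤ β(n)` for every integer `n ≥ 1`. -/
theorem laplace_bound_antitone
    (σ γ : ℝ) (hσ : 0 < σ) (hγ : γ ∈ Set.Ioc (0 : ℝ) 1)
    (β : ℕ → ℝ)
    (hβ : ∀ n : ℕ, β n =
      σ * Real.sqrt (2 / (n : ℝ) * (1 + 1 / (n : ℝ)) *
        Real.log (Real.sqrt ((n : ℝ) + 1) / γ))) :
    ∀ n : ℕ, 1 ≤ n → β (n + 1) ≤ β n := by
  intro n hn
  obtain ⟨hγ0, hγ1⟩ := hγ
  have hc : 0 ≤ -Real.log γ := by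
    have := Real.log_nonpos hγ0.le hγ1
    linarith
  have hx : (1:ℝ) ≤ (n:ℝ) := by exact_mod_cast hn
  have hlog : ∀ y : ℝ, 0 < y →
      Real.log (Real.sqrt y / γ) = Real.log y / 2 + -Real.log γ := by
    intro y hy
    rw [Real.log_div (Real.sqrt_ne_zero'.mpr hy) hγ0.ne', Real.log_sqrt hy.le]
    ring
  rw [hβ, hβ]
  push_cast
  rw [hlog ((n:ℝ) + 1 + 1) (by linarith), hlog ((n:ℝ) + 1) (by linarith)]
  apply mul_le_mul_of_nonneg_left _ hσ.le
  apply Real.sqrt_le_sqrt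
  have h21 : (n:ℝ) + 1 + 1 = (n:ℝ) + 2 := by ring
  rw [h21]
  exact laplace_key (n:ℝ) (-Real.log γ) hx hc
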